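/- Let $q : \mathbb{Z}^n \times \mathbb{Z}^n \to \mathbb{C}$ and suppose there exist $\sigma \in \mathbb{R}$ and, for $N = n+1+\lceil|\sigma|\rceil$, a constant $C_N > 0$ such that $|q(\xi,\eta)| \leq C_N (1+|\xi-\eta|)^{-N}(1+|\eta|)^{\sigma}$ for all $\xi,\eta$. Define $Q$ on sequences by $(Qa)(\xi) = \sum_{\eta} q(\xi,\eta) a(\eta)$. Then there is a constant $M > 0$ (depending only on $n$, $\sigma$, $C_N$) such that for all finitely supported $a : \mathbb{Z}^n \to \mathbb{C}$, $\left(\sum_{\xi} |(Qa)(\xi)|^2\right)^{1/2} \leq M \left(\sum_{\eta} (1+|\eta|)^{2\sigma} |a(\eta)|^2\right)^{1/2}$. -/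

import Mathlib

set_option maxHeartbeats 1000000

/-- Euclidean norm of a lattice point of `ℤ^n`. -/
noncomputable def znorm {n : ℕ} (ξ : Fin n → ℤ) : ℝ :=
  Real.sqrt (∑ i, ((ξ i : ℝ)) ^ 2)


lemma znorm_nonneg {n : ℕ} (ξ : Fin n → ℤ) : 0 ≤ znorm ξ := Real.sqrt_nonneg _

lemma abs_le_znorm {n : ℕ} (ξ : Fin n → ℤ) (i : Fin n) : |(ξ i : ℝ)| ≤ znorm ξ := by
  rw [← Real.sqrt_sq_eq_abs]
  exact Real.sqrt_le_sqrt (Finset.single_le_sum (f := fun j => ((ξ j : ℝ)) ^ 2)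
    (fun j _ => sq_nonneg _) (Finset.mem_univ i))

lemma summable_one_add_abs_int {b : ℝ} (hb : 1 < b) :
    Summable (fun k : ℤ => (1 + |(k : ℝ)|) ^ (-b)) := by
  rw [← Finset.summable_compl_iff ({0} : Finset ℤ)]
  refine Summable.of_nonneg_of_le (fun k => Real.rpow_nonneg (by positivity) _)
    (fun k => ?_) ((Real.summable_abs_int_rpow hb).subtype _)
  have hk : (k : ℤ) ≠ 0 := by simpa using k.2
  have h1 : (1 : ℝ) ≤ |((k : ℤ) : ℝ)| := by
    rw [← Int.cast_abs]; exact_mod_cast Int.one_le_abs hk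
  show (1 + |((k : ℤ) : ℝ)|) ^ (-b) ≤ |((k : ℤ) : ℝ)| ^ (-b)
  rw [Real.rpow_neg (by positivity), Real.rpow_neg (by positivity)]
  exact inv_anti₀ (Real.rpow_pos_of_pos (by linarith) _)
    (Real.rpow_le_rpow (by linarith) (by linarith) (by linarith))

lemma summable_prod_one_add_abs {b : ℝ} (hb : 1 < b) (n : ℕ) :
    Summable (fun ζ : Fin n → ℤ => ∏ i, (1 + |(ζ i : ℝ)|) ^ (-b)) := by
  induction n with
  | zero => exact Summable.of_finite
  | succ m ih =>
      have key : Summable (fun p : ℤ × (Fin m → ℤ) =>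
          (1 + |(p.1 : ℝ)|) ^ (-b) * ∏ i, (1 + |(p.2 i : ℝ)|) ^ (-b)) :=
        (summable_one_add_abs_int hb).mul_of_nonneg
          (g := fun ζ : Fin m → ℤ => ∏ i, (1 + |(ζ i : ℝ)|) ^ (-b)) ih
          (fun k => Real.rpow_nonneg (by positivity) _)
          (fun ζ => Finset.prod_nonneg fun i _ => Real.rpow_nonneg (by positivity) _)
      set e := Fin.consEquiv (fun _ : Fin (m+1) => ℤ) with he
      have key2 : Summable ((fun ζ : Fin (m+1) → ℤ => ∏ i, (1 + |(ζ i : ℝ)|) ^ (-b)) ∘ e) := by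
        refine key.congr fun p => ?_
        show _ = ∏ i : Fin (m+1), (1 + |((Fin.cons p.1 p.2 : Fin (m+1) → ℤ) i : ℝ)|) ^ (-b)
        rw [Fin.prod_univ_succ]
        simp
      exact (Equiv.summable_iff e).mp key2

lemma summable_one_add_znorm {n : ℕ} {r : ℝ} (hr : (n : ℝ) < r) :
    Summable (fun ζ : Fin n → ℤ => (1 + znorm ζ) ^ (-r)) := by
  rcases Nat.eq_zero_or_pos n with h0 | hn
  · subst h0; exact Summable.of_finite
  have hn' : (0 : ℝ) < n := by exact_mod_cast hn
  set b : ℝ := r / n with hbdef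
  have hb : 1 < b := (lt_div_iff₀ hn').mpr (by linarith)
  refine (summable_prod_one_add_abs hb n).of_nonneg_of_le
    (fun ζ => Real.rpow_nonneg (by have := znorm_nonneg ζ; linarith) _) (fun ζ => ?_)
  have hz : (0 : ℝ) < 1 + znorm ζ := by have := znorm_nonneg ζ; linarith
  have hprod : ∏ i, (1 + |(ζ i : ℝ)|) ^ b ≤ (1 + znorm ζ) ^ r := by
    calc ∏ i : Fin n, (1 + |(ζ i : ℝ)|) ^ b
        ≤ ∏ _i : Fin n, (1 + znorm ζ) ^ b := by
          refine Finset.prod_le_prod (fun i _ => Real.rpow_nonneg (by positivity) _)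
            (fun i _ => Real.rpow_le_rpow (by positivity)
              (by have := abs_le_znorm ζ i; linarith) (by positivity))
      _ = ((1 + znorm ζ) ^ b) ^ (n : ℕ) := by
          rw [Finset.prod_const, Finset.card_univ, Fintype.card_fin]
      _ = (1 + znorm ζ) ^ r := by
          rw [← Real.rpow_natCast ((1 + znorm ζ) ^ b) n, ← Real.rpow_mul hz.le]
          congr 1
          rw [hbdef, div_mul_cancel₀ r hn'.ne']
  rw [Real.rpow_neg hz.le]
  calc (( 1 + znorm ζ) ^ r)⁻¹ ≤ (∏ i, (1 + |(ζ i : ℝ)|) ^ b)⁻¹ :=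
        inv_anti₀ (Finset.prod_pos fun i _ => Real.rpow_pos_of_pos (by positivity) _) hprod
    _ = ∏ i, (1 + |(ζ i : ℝ)|) ^ (-b) := by
        rw [← Finset.prod_inv_distrib]
        exact Finset.prod_congr rfl fun i _ => (Real.rpow_neg (by positivity) _).symm

/-- Discrete Schur-test: a kernel on `ℤ^n × ℤ^n` with off-diagonal decay of order
`N = n+1+⌈|σ|⌉` relative to the weight `(1+|η|)^σ` is bounded from the weighted `ℓ²`
space into `ℓ²`. -/
theorem discrete_schur_test (n : ℕ) (σ : ℝ)
    (q : (Fin n → ℤ) → (Fin n → ℤ) → ℂ) (CN : ℝ) (hCN : 0 < CN)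
    (hq : ∀ ξ η : Fin n → ℤ, ‖q ξ η‖ ≤
      CN * (1 + znorm (ξ - η)) ^ (-((n : ℝ) + 1 + (⌈|σ|⌉ : ℝ))) * (1 + znorm η) ^ σ) :
    ∃ M > 0, ∀ a : (Fin n → ℤ) → ℂ, (Function.support a).Finite →
      Real.sqrt (∑' ξ : Fin n → ℤ, ‖∑' η : Fin n → ℤ, q ξ η * a η‖ ^ 2)
        ≤ M * Real.sqrt (∑' η : Fin n → ℤ,
            (1 + znorm η) ^ (2 * σ) * ‖a η‖ ^ 2) := by
  have hceil : (0 : ℝ) ≤ (⌈|σ|⌉ : ℤ) := by exact_mod_cast Int.ceil_nonneg (abs_nonneg σ)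
  set N : ℝ := (n : ℝ) + 1 + (⌈|σ|⌉ : ℝ) with hNdef
  have hN : (n : ℝ) < N := by rw [hNdef]; linarith
  set F : (Fin n → ℤ) → ℝ := fun ζ => (1 + znorm ζ) ^ (-N) with hFdef
  have hzpos : ∀ ζ : Fin n → ℤ, (0 : ℝ) < 1 + znorm ζ := fun ζ => by
    have := znorm_nonneg ζ; linarith
  have hFpos : ∀ ζ, 0 < F ζ := fun ζ => Real.rpow_pos_of_pos (hzpos ζ) _
  have hFsum : Summable F := summable_one_add_znorm hN
  set K : ℝ := ∑' ζ, F ζ with hKdef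
  have hK : 0 < K := lt_of_lt_of_le (hFpos 0)
    (Summable.le_tsum hFsum 0 (fun j _ => (hFpos j).le))
  set M : ℝ := CN * K with hMdef
  have hM : 0 < M := mul_pos hCN hK
  refine ⟨M, hM, fun a hfin => ?_⟩
  classical
  set S : Finset (Fin n → ℤ) := hfin.toFinset with hSdef
  set b : (Fin n → ℤ) → ℝ := fun η => (1 + znorm η) ^ σ * ‖a η‖ with hbdef
  have hbnn : ∀ η, 0 ≤ b η := fun η =>
    mul_nonneg (Real.rpow_nonneg (hzpos η).le _) (norm_nonneg _)
  have hazero : ∀ η ∉ S, a η = 0 := by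
    intro η hη
    by_contra h
    exact hη (hfin.mem_toFinset.mpr h)
  -- inner sum is a finite sum
  have hinner : ∀ ξ, ∑' η, q ξ η * a η = ∑ η ∈ S, q ξ η * a η := fun ξ =>
    tsum_eq_sum (fun η hη => by rw [hazero η hη, mul_zero])
  -- pointwise bound
  have hpoint : ∀ ξ, ‖∑ η ∈ S, q ξ η * a η‖ ≤
      ∑ η ∈ S, CN * F (ξ - η) * b η := by
    intro ξ
    refine le_trans (norm_sum_le _ _) (Finset.sum_le_sum fun η _ => ?_)
    rw [norm_mul]
    calc ‖q ξ η‖ * ‖a η‖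
        ≤ (CN * F (ξ - η) * (1 + znorm η) ^ σ) * ‖a η‖ :=
          mul_le_mul_of_nonneg_right (hq ξ η) (norm_nonneg _)
      _ = CN * F (ξ - η) * b η := by rw [hbdef]; ring
  -- row sums
  have hrow : ∀ ξ, ∑ η ∈ S, CN * F (ξ - η) ≤ M := by
    intro ξ
    have h1 : ∑ η ∈ S, F (ξ - η) ≤ K := by
      have hinj : ∀ x ∈ S, ∀ y ∈ S, ξ - x = ξ - y → x = y := fun x _ y _ h =>
        sub_right_injective h
      calc ∑ η ∈ S, F (ξ - η) = ∑ ζ ∈ S.image (fun η => ξ - η), F ζ :=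
            (Finset.sum_image hinj).symm
        _ ≤ K := Summable.sum_le_tsum _ (fun ζ _ => (hFpos ζ).le) hFsum
    calc ∑ η ∈ S, CN * F (ξ - η) = CN * ∑ η ∈ S, F (ξ - η) := by
          rw [Finset.mul_sum]
      _ ≤ CN * K := mul_le_mul_of_nonneg_left h1 hCN.le
  -- Cauchy–Schwarz
  have hCS : ∀ ξ, (‖∑' η, q ξ η * a η‖) ^ 2 ≤
      M * ∑ η ∈ S, CN * F (ξ - η) * (b η) ^ 2 := by
    intro ξ
    rw [hinner ξ]
    have hxnn : ∀ η, (0:ℝ) ≤ CN * F (ξ - η) := fun η =>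
      (mul_pos hCN (hFpos _)).le
    have h2 : (∑ η ∈ S, CN * F (ξ - η) * b η) ^ 2 ≤
        (∑ η ∈ S, CN * F (ξ - η)) * ∑ η ∈ S, CN * F (ξ - η) * (b η) ^ 2 := by
      calc (∑ η ∈ S, CN * F (ξ - η) * b η) ^ 2
          = (∑ η ∈ S, Real.sqrt (CN * F (ξ - η)) *
              (Real.sqrt (CN * F (ξ - η)) * b η)) ^ 2 := by
            congr 1
            refine Finset.sum_congr rfl fun η _ => ?_
            have h := Real.sq_sqrt (hxnn η)
            rw [hbdef]
            linear_combination (-((1 + znorm η) ^ σ * ‖a η‖)) * h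
        _ ≤ (∑ η ∈ S, (Real.sqrt (CN * F (ξ - η))) ^ 2) *
              ∑ η ∈ S, (Real.sqrt (CN * F (ξ - η)) * b η) ^ 2 :=
            Finset.sum_mul_sq_le_sq_mul_sq S _ _
        _ = (∑ η ∈ S, CN * F (ξ - η)) * ∑ η ∈ S, CN * F (ξ - η) * (b η) ^ 2 := by
            congr 1
            · exact Finset.sum_congr rfl fun η _ => Real.sq_sqrt (hxnn η)
            · refine Finset.sum_congr rfl fun η _ => ?_
              rw [mul_pow, Real.sq_sqrt (hxnn η)]
    calc (‖∑ η ∈ S, q ξ η * a η‖) ^ 2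
        ≤ (∑ η ∈ S, CN * F (ξ - η) * b η) ^ 2 :=
          pow_le_pow_left₀ (norm_nonneg _) (hpoint ξ) 2
      _ ≤ (∑ η ∈ S, CN * F (ξ - η)) * ∑ η ∈ S, CN * F (ξ - η) * (b η) ^ 2 := h2
      _ ≤ M * ∑ η ∈ S, CN * F (ξ - η) * (b η) ^ 2 :=
          mul_le_mul_of_nonneg_right (hrow ξ)
            (Finset.sum_nonneg fun η _ => mul_nonneg (hxnn η) (sq_nonneg _))
  -- summability of the dominating function
  have hgsum_each : ∀ η ∈ S, Summable (fun ξ => CN * F (ξ - η) * (b η) ^ 2) := by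
    intro η _
    have : Summable (fun ξ => F (ξ - η)) := by
      have := hFsum.comp_injective (Equiv.subRight η).injective
      exact this
    exact (this.mul_left CN).mul_right _
  have hgsum : Summable (fun ξ => ∑ η ∈ S, CN * F (ξ - η) * (b η) ^ 2) :=
    summable_sum hgsum_each
  have hLHSsum : Summable (fun ξ => (‖∑' η, q ξ η * a η‖) ^ 2) :=
    (hgsum.mul_left M).of_nonneg_of_le (fun ξ => sq_nonneg _) hCS
  -- tsum bound
  have h5 : ∑' ξ, (‖∑' η, q ξ η * a η‖) ^ 2 ≤
      ∑' ξ, M * ∑ η ∈ S, CN * F (ξ - η) * (b η) ^ 2 :=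
    Summable.tsum_le_tsum hCS hLHSsum (hgsum.mul_left M)
  have hcol : ∀ η : Fin n → ℤ, ∑' ξ, F (ξ - η) = K := fun η =>
    (Equiv.subRight η).tsum_eq F
  have h6 : ∑' ξ, M * ∑ η ∈ S, CN * F (ξ - η) * (b η) ^ 2 =
      M ^ 2 * ∑ η ∈ S, (b η) ^ 2 := by
    rw [tsum_mul_left]
    rw [Summable.tsum_finsetSum hgsum_each]
    have : ∀ η ∈ S, ∑' ξ, CN * F (ξ - η) * (b η) ^ 2 = CN * K * (b η) ^ 2 := by
      intro η _
      rw [tsum_mul_right, tsum_mul_left, hcol η]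
    rw [Finset.sum_congr rfl this, ← Finset.mul_sum]
    rw [hMdef]; ring
  -- RHS sum
  have hRHS : ∑' η, (1 + znorm η) ^ (2 * σ) * (‖a η‖) ^ 2 =
      ∑ η ∈ S, (b η) ^ 2 := by
    rw [tsum_eq_sum (s := S) (fun η hη => by rw [hazero η hη]; simp)]
    refine Finset.sum_congr rfl fun η _ => ?_
    rw [hbdef, mul_pow]
    congr 1
    rw [pow_two, ← Real.rpow_add (hzpos η), two_mul]
  have hfinal : ∑' ξ, (‖∑' η, q ξ η * a η‖) ^ 2 ≤
      M ^ 2 * ∑' η, (1 + znorm η) ^ (2 * σ) * (‖a η‖) ^ 2 := by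
    rw [hRHS]
    exact h5.trans (le_of_eq h6)
  calc Real.sqrt (∑' ξ, (‖∑' η, q ξ η * a η‖) ^ 2)
      ≤ Real.sqrt (M ^ 2 * ∑' η, (1 + znorm η) ^ (2 * σ) * (‖a η‖) ^ 2) :=
        Real.sqrt_le_sqrt hfinal
    _ = M * Real.sqrt (∑' η, (1 + znorm η) ^ (2 * σ) * (‖a η‖) ^ 2) := by
        rw [Real.sqrt_mul (sq_nonneg M), Real.sqrt_sq hM.le]
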